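/- The Laplace operator Δ = ∂/∂x ∂/∂x̄ − Σ_{i=1}^n ∂/∂ξ_i ∂/∂ξ̄_i maps S^k(C^{2|2n}) surjectively onto S^{k−2}(C^{2|2n}) for every k ≥ 2. -/

import Mathlib

open scoped TensorProduct

noncomputable section

/-- The exterior algebra on the `2n` odd variables `ξ₁,…,ξₙ,ξ̄₁,…,ξ̄ₙ`
(`ξᵢ` corresponds to basis index `i-1`, `ξ̄ᵢ` to index `n+i-1`). -/
abbrev ExtA (n : ℕ) := ExteriorAlgebra ℂ (Fin (2 * n) → ℂ)

/-- The supercommutative algebra `ℂ[x, x̄, ξᵢ, ξ̄ᵢ] = ℂ[x,x̄] ⊗ Λ(ξᵢ, ξ̄ᵢ)`,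
identified with `S(ℂ^{2|2n})`.  `x` is `X 0`, `x̄` is `X 1`. -/
abbrev SAlg (n : ℕ) := TensorProduct ℂ (MvPolynomial (Fin 2) ℂ) (ExtA n)

/-- The odd generator with index `i`. -/
def xiV (n : ℕ) (i : Fin (2 * n)) : ExtA n := ExteriorAlgebra.ι ℂ (Pi.single i 1)

/-- The odd (left) partial derivative with respect to the `i`-th odd variable,
realized as left contraction in the exterior algebra. -/
def oddD (n : ℕ) (i : Fin (2 * n)) : ExtA n →ₗ[ℂ] ExtA n :=
  CliffordAlgebra.contractLeft (LinearMap.proj i)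

/-- `∂/∂x ∂/∂x̄` on the even (polynomial) part. -/
def evenD2 : MvPolynomial (Fin 2) ℂ →ₗ[ℂ] MvPolynomial (Fin 2) ℂ :=
  (MvPolynomial.pderiv (0 : Fin 2)).toLinearMap ∘ₗ (MvPolynomial.pderiv (1 : Fin 2)).toLinearMap

/-- The Laplace operator `Δ = ∂/∂x ∂/∂x̄ − Σᵢ ∂/∂ξᵢ ∂/∂ξ̄ᵢ`. -/
def Lap (n : ℕ) : SAlg n →ₗ[ℂ] SAlg n :=
  TensorProduct.map evenD2 LinearMap.id -
    ∑ i : Fin n, TensorProduct.map LinearMap.id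
      (oddD n ⟨i, by omega⟩ ∘ₗ oddD n ⟨n + i, by omega⟩)

/-- The degree-`k` graded component `S^k(ℂ^{2|2n})`: the span of the monomials
`x^a x̄^b ξ_{i₁} ⋯ ξ_{i_j}` of total degree `a + b + j = k`. -/
def Sk (n k : ℕ) : Submodule ℂ (SAlg n) :=
  Submodule.span ℂ {z | ∃ (a b : ℕ) (l : List (Fin (2 * n))), a + b + l.length = k ∧
    z = (MvPolynomial.X 0 ^ a * MvPolynomial.X 1 ^ b) ⊗ₜ[ℂ] (l.map (xiV n)).prod}

/-- the Laplace operator `Δ = ∂/∂x ∂/∂x̄ − Σᵢ ∂/∂ξᵢ ∂/∂ξ̄ᵢ` maps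
`S^k(ℂ^{2|2n})` surjectively onto `S^{k−2}(ℂ^{2|2n})` for every `k ≥ 2`. -/
-- auxiliary
def Ek (n j : ℕ) : Submodule ℂ (ExtA n) :=
  Submodule.span ℂ {z | ∃ l : List (Fin (2 * n)), l.length = j ∧ z = (l.map (xiV n)).prod}

def Dop (n : ℕ) : ExtA n →ₗ[ℂ] ExtA n :=
  ∑ i : Fin n, (oddD n ⟨i, by omega⟩ ∘ₗ oddD n ⟨n + i, by omega⟩)

lemma prod_mem_Ek (n : ℕ) (l : List (Fin (2 * n))) : (l.map (xiV n)).prod ∈ Ek n l.length :=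
  Submodule.subset_span ⟨l, rfl, rfl⟩

lemma Lap_tmul (n : ℕ) (p : MvPolynomial (Fin 2) ℂ) (z : ExtA n) :
    Lap n (p ⊗ₜ[ℂ] z) = evenD2 p ⊗ₜ[ℂ] z - p ⊗ₜ[ℂ] Dop n z := by
  simp only [Lap, Dop, LinearMap.sub_apply, LinearMap.sum_apply, TensorProduct.map_tmul,
    LinearMap.id_coe, id_eq, map_sum, TensorProduct.tmul_sum]

lemma xiV_mul_mem (n : ℕ) (i : Fin (2 * n)) {j : ℕ} {z : ExtA n} (hz : z ∈ Ek n j) :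
    xiV n i * z ∈ Ek n (j + 1) := by
  induction hz using Submodule.span_induction with
  | mem z hzin =>
    obtain ⟨l, hl, rfl⟩ := hzin
    exact Submodule.subset_span ⟨i :: l, by simp [hl], by simp⟩
  | zero => simp
  | add x y hx hy hx' hy' => rw [mul_add]; exact add_mem hx' hy'
  | smul c x hx hx' => rw [mul_smul_comm]; exact Submodule.smul_mem _ _ hx'

lemma oddD_prod (n : ℕ) (i : Fin (2 * n)) (l : List (Fin (2 * n))) :
    oddD n i ((l.map (xiV n)).prod) ∈ Ek n (l.length - 1) := by
  induction l with
  | nil => simp [oddD, CliffordAlgebra.contractLeft_one]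
  | cons hd tl ih =>
    simp only [List.map_cons, List.prod_cons, List.length_cons, Nat.add_sub_cancel]
    rw [xiV, oddD, CliffordAlgebra.contractLeft_ι_mul]
    refine sub_mem (Submodule.smul_mem _ _ (prod_mem_Ek n tl)) ?_
    rcases tl with _ | ⟨h2, t2⟩
    · simpa [oddD, CliffordAlgebra.contractLeft_one] using (Ek n 0).zero_mem
    · have := xiV_mul_mem n hd (j := (h2 :: t2).length - 1) (ih)
      simp only [List.length_cons, Nat.add_sub_cancel] at this ⊢; exact this

lemma oddD_mem (n : ℕ) (i : Fin (2 * n)) {j : ℕ} {z : ExtA n} (hz : z ∈ Ek n j) :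
    oddD n i z ∈ Ek n (j - 1) := by
  induction hz using Submodule.span_induction with
  | mem z hzin => obtain ⟨l, hl, rfl⟩ := hzin; exact hl ▸ oddD_prod n i l
  | zero => simp
  | add x y hx hy hx' hy' => rw [map_add]; exact add_mem hx' hy'
  | smul c x hx hx' => rw [map_smul]; exact Submodule.smul_mem _ _ hx'

lemma oddD_zero (n : ℕ) (i : Fin (2 * n)) {z : ExtA n} (hz : z ∈ Ek n 0) :
    oddD n i z = 0 := by
  induction hz using Submodule.span_induction with
  | mem z hzin =>
    obtain ⟨l, hl, rfl⟩ := hzin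
    rw [List.length_eq_zero_iff] at hl
    subst hl
    simp [oddD, CliffordAlgebra.contractLeft_one]
  | zero => simp
  | add x y hx hy hx' hy' => rw [map_add, hx', hy', add_zero]
  | smul c x hx hx' => rw [map_smul, hx', smul_zero]

lemma Dop_mem (n : ℕ) {j : ℕ} {z : ExtA n} (hz : z ∈ Ek n j) : Dop n z ∈ Ek n (j - 2) := by
  rw [Dop, LinearMap.sum_apply]
  refine Submodule.sum_mem _ fun i _ => ?_
  have h1 := oddD_mem n ⟨n + i, by omega⟩ hz
  have h2 := oddD_mem n ⟨i, by omega⟩ h1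
  simpa [Nat.sub_sub] using h2

lemma Dop_zero (n : ℕ) {j : ℕ} (hj : j ≤ 1) {z : ExtA n} (hz : z ∈ Ek n j) : Dop n z = 0 := by
  rw [Dop, LinearMap.sum_apply]
  refine Finset.sum_eq_zero fun i _ => ?_
  have h1 : oddD n ⟨n + i, by omega⟩ z ∈ Ek n 0 := by
    have := oddD_mem n (⟨n + i, by omega⟩ : Fin (2 * n)) hz
    interval_cases j
    · exact oddD_zero n _ hz ▸ (Ek n 0).zero_mem
    · simpa using this
  simp only [LinearMap.comp_apply]
  exact oddD_zero n _ h1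

lemma tmul_mem (n : ℕ) {m a b j : ℕ} (h : a + b + j = m) {z : ExtA n} (hz : z ∈ Ek n j) :
    (MvPolynomial.X 0 ^ a * MvPolynomial.X 1 ^ b : MvPolynomial (Fin 2) ℂ) ⊗ₜ[ℂ] z ∈ Sk n m := by
  induction hz using Submodule.span_induction with
  | mem z hzin =>
    obtain ⟨l, hl, rfl⟩ := hzin
    exact Submodule.subset_span ⟨a, b, l, by omega, rfl⟩
  | zero => rw [TensorProduct.tmul_zero]; exact zero_mem _
  | add x y hx hy hx' hy' => rw [TensorProduct.tmul_add]; exact add_mem hx' hy'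
  | smul c x hx hx' => rw [TensorProduct.tmul_smul]; exact Submodule.smul_mem _ _ hx'

lemma evenD2_apply (p : MvPolynomial (Fin 2) ℂ) :
    evenD2 p = MvPolynomial.pderiv 0 (MvPolynomial.pderiv 1 p) := rfl

lemma evenD2_pow (a b : ℕ) :
    evenD2 (MvPolynomial.X 0 ^ (a + 1) * MvPolynomial.X 1 ^ (b + 1) : MvPolynomial (Fin 2) ℂ)
      = (((a : ℂ) + 1) * ((b : ℂ) + 1)) •
        (MvPolynomial.X 0 ^ a * MvPolynomial.X 1 ^ b) := by
  have h10 : (1 : Fin 2) ≠ 0 := by decide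
  have h01 : (0 : Fin 2) ≠ 1 := by decide
  rw [evenD2_apply]
  simp only [MvPolynomial.pderiv_mul, MvPolynomial.pderiv_pow, MvPolynomial.pderiv_X_self,
    MvPolynomial.pderiv_X_of_ne h10, MvPolynomial.pderiv_X_of_ne h01,
    Derivation.map_natCast, Derivation.map_one_eq_zero, MvPolynomial.smul_eq_C_mul, map_mul, map_add, mul_zero, zero_mul, add_zero, zero_add, mul_one, map_natCast, MvPolynomial.C_1, Nat.add_sub_cancel_left, Nat.add_sub_cancel,
    Nat.cast_add, Nat.cast_one]
  ring

lemma evenD2_zero_left (b : ℕ) :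
    evenD2 (MvPolynomial.X 0 ^ 0 * MvPolynomial.X 1 ^ b : MvPolynomial (Fin 2) ℂ) = 0 := by
  have h01 : (0 : Fin 2) ≠ 1 := by decide
  rw [evenD2_apply]
  simp [MvPolynomial.pderiv_pow, MvPolynomial.pderiv_X_of_ne h01]

lemma evenD2_zero_right (a : ℕ) :
    evenD2 (MvPolynomial.X 0 ^ a * MvPolynomial.X 1 ^ 0 : MvPolynomial (Fin 2) ℂ) = 0 := by
  have h10 : (1 : Fin 2) ≠ 0 := by decide
  rw [evenD2_apply]
  simp [MvPolynomial.pderiv_pow, MvPolynomial.pderiv_X_of_ne h10]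


lemma Lap_gen_mem (n k : ℕ) (a b : ℕ) (l : List (Fin (2 * n))) (h : a + b + l.length = k) :
    Lap n ((MvPolynomial.X 0 ^ a * MvPolynomial.X 1 ^ b) ⊗ₜ[ℂ] (l.map (xiV n)).prod)
      ∈ Sk n (k - 2) := by
  rw [Lap_tmul]
  refine sub_mem ?_ ?_
  · -- even term
    rcases a with _ | a
    · rw [evenD2_zero_left, TensorProduct.zero_tmul]; exact zero_mem _
    rcases b with _ | b
    · rw [evenD2_zero_right, TensorProduct.zero_tmul]; exact zero_mem _
    rw [evenD2_pow, ← TensorProduct.smul_tmul']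
    exact Submodule.smul_mem _ _ (tmul_mem n (by omega) (prod_mem_Ek n l))
  · -- odd term
    by_cases hj : l.length ≤ 1
    · rw [Dop_zero n hj (prod_mem_Ek n l), TensorProduct.tmul_zero]; exact zero_mem _
    · exact tmul_mem n (by omega) (Dop_mem n (prod_mem_Ek n l))

lemma key (n k : ℕ) (hk : 2 ≤ k) : ∀ j a b : ℕ, a + b + j = k - 2 → ∀ z ∈ Ek n j,
    (MvPolynomial.X 0 ^ a * MvPolynomial.X 1 ^ b : MvPolynomial (Fin 2) ℂ) ⊗ₜ[ℂ] z
      ∈ Submodule.map (Lap n) (Sk n k) := by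
  intro j
  induction j using Nat.strong_induction_on with
  | _ j ih =>
    intro a b hab z hz
    induction hz using Submodule.span_induction with
    | mem z hzin =>
      obtain ⟨l, hl, rfl⟩ := hzin
      set p := (MvPolynomial.X 0 ^ a * MvPolynomial.X 1 ^ b : MvPolynomial (Fin 2) ℂ)
      set p1 := (MvPolynomial.X 0 ^ (a + 1) * MvPolynomial.X 1 ^ (b + 1) :
        MvPolynomial (Fin 2) ℂ)
      set z := (l.map (xiV n)).prod
      set c : ℂ := ((a : ℂ) + 1) * ((b : ℂ) + 1)
      have hc : c ≠ 0 := mul_ne_zero (Nat.cast_add_one_ne_zero a) (Nat.cast_add_one_ne_zero b)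
      have hw : p1 ⊗ₜ[ℂ] z ∈ Sk n k :=
        Submodule.subset_span ⟨a + 1, b + 1, l, by omega, rfl⟩
      have hLap : Lap n (p1 ⊗ₜ[ℂ] z) = c • (p ⊗ₜ[ℂ] z) - p1 ⊗ₜ[ℂ] Dop n z := by
        rw [Lap_tmul, evenD2_pow, TensorProduct.smul_tmul']
      have hDterm : p1 ⊗ₜ[ℂ] Dop n z ∈ Submodule.map (Lap n) (Sk n k) := by
        by_cases hj : l.length ≤ 1
        · rw [Dop_zero n hj (prod_mem_Ek n l), TensorProduct.tmul_zero]; exact zero_mem _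
        · exact ih (l.length - 2) (by omega) (a + 1) (b + 1) (by omega) _
            (Dop_mem n (prod_mem_Ek n l))
      have hLapmem : Lap n (p1 ⊗ₜ[ℂ] z) ∈ Submodule.map (Lap n) (Sk n k) :=
        ⟨p1 ⊗ₜ[ℂ] z, hw, rfl⟩
      have : p ⊗ₜ[ℂ] z = c⁻¹ • (Lap n (p1 ⊗ₜ[ℂ] z) + p1 ⊗ₜ[ℂ] Dop n z) := by
        rw [hLap, sub_add_cancel, smul_smul, inv_mul_cancel₀ hc, one_smul]
      rw [this]
      exact Submodule.smul_mem _ _ (add_mem hLapmem hDterm)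
    | zero => rw [TensorProduct.tmul_zero]; exact zero_mem _
    | add x y hx hy hx' hy' => rw [TensorProduct.tmul_add]; exact add_mem hx' hy'
    | smul c x hx hx' => rw [TensorProduct.tmul_smul]; exact Submodule.smul_mem _ _ hx'

theorem Lap_surjective (n k : ℕ) (hk : 2 ≤ k) :
    Submodule.map (Lap n) (Sk n k) = Sk n (k - 2) := by
  apply le_antisymm
  · rw [Sk, Submodule.map_span, Submodule.span_le]
    rintro _ ⟨w, ⟨a, b, l, h, rfl⟩, rfl⟩
    exact Lap_gen_mem n k a b l h
  · rw [show Sk n (k - 2) = Submodule.span ℂ _ from rfl, Submodule.span_le]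
    rintro _ ⟨a, b, l, h, rfl⟩
    exact key n k hk l.length a b h _ (prod_mem_Ek n l)
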